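/- Define J* : ℝ³×ℝ³ → ℝ by J*(ω,v) = (1/2)·‖t(exp(X(ω,v)))‖², where t(g) ∈ ℝ³ is the top-right 3×1 block (the translation part) of a 4×4 matrix g and ‖·‖ is the Euclidean norm. Then for every s > 0 and every r ∈ ℝ, J*(s·e₁, r·e₃) = (r²/2)·( ((1 − cos s)/s)² + (sin s / s)² ), where e₁, e₃ are the first and third standard basis vectors of ℝ³. -/

import Mathlib

open scoped Matrix
open NormedSpace

/-- ℝ³ with the Euclidean norm. -/
abbrev E3 := EuclideanSpace ℝ (Fin 3)

/-- The hat map: `hat ω` is the skew-symmetric matrix with `hat ω *ᵥ x = ω × x`. -/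
def hat (ω : E3) : Matrix (Fin 3) (Fin 3) ℝ :=
  !![0, -ω 2, ω 1; ω 2, 0, -ω 0; -ω 1, ω 0, 0]

/-- The homogeneous 4×4 representation of the se(3) element `(ω, v)`. -/
def seX (ω v : E3) : Matrix (Fin 4) (Fin 4) ℝ :=
  Matrix.of fun i j =>
    if hi : (i : ℕ) < 3 then
      if hj : (j : ℕ) < 3 then hat ω ⟨i, hi⟩ ⟨j, hj⟩ else v ⟨i, hi⟩
    else 0

/-- First standard basis vector of ℝ³. -/
noncomputable def e₁ : E3 := EuclideanSpace.single 0 1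

/-- Third standard basis vector of ℝ³. -/
noncomputable def e₃ : E3 := EuclideanSpace.single 2 1

/-- The translation part of a 4×4 matrix: its top-right 3×1 block, as a Euclidean vector. -/
noncomputable def tPart (g : Matrix (Fin 4) (Fin 4) ℝ) : E3 :=
  (WithLp.equiv 2 (Fin 3 → ℝ)).symm fun i => g i.castSucc (Fin.last 3)

/-- The translation-distance objective `J*(ω,v) = ½‖t(exp X(ω,v))‖²`. -/
noncomputable def Jstar (ω v : E3) : ℝ := (1 / 2) * ‖tPart (exp (seX ω v))‖ ^ 2


set_option maxHeartbeats 1000000 in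
private lemma pow_odd_of_cube {A : Matrix (Fin 4) (Fin 4) ℝ} {c : ℝ}
    (hA : A ^ 3 = (-(c ^ 2)) • A) (k : ℕ) :
    A ^ (2 * k + 1) = ((-1 : ℝ) ^ k * c ^ (2 * k)) • A := by
  induction k with
  | zero => simp
  | succ n ih =>
    have h : 2 * (n + 1) + 1 = (2 * n + 1) + 2 := by ring
    rw [h, pow_add, ih, Matrix.smul_mul, show A * A ^ 2 = A ^ 3 from (pow_succ' A 2).symm, hA,
      smul_smul]
    congr 1
    ring

set_option maxHeartbeats 1000000 in
private lemma pow_even_of_cube {A : Matrix (Fin 4) (Fin 4) ℝ} {c : ℝ}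
    (hA : A ^ 3 = (-(c ^ 2)) • A) (k : ℕ) :
    A ^ (2 * (k + 1)) = ((-1 : ℝ) ^ k * c ^ (2 * k)) • A ^ 2 := by
  have h : 2 * (k + 1) = (2 * k + 1) + 1 := by ring
  rw [h, pow_succ, pow_odd_of_cube hA, Matrix.smul_mul, ← pow_two]

set_option maxHeartbeats 1000000 in
private lemma exp_of_cube {A : Matrix (Fin 4) (Fin 4) ℝ} {c : ℝ} (hc : c ≠ 0)
    (hA : A ^ 3 = (-(c ^ 2)) • A) :
    exp A = 1 + (Real.sin c / c) • A + ((1 - Real.cos c) / c ^ 2) • A ^ 2 := by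
  rw [exp_eq_tsum (𝕂 := ℝ)]
  refine HasSum.tsum_eq ?_
  have hodd : HasSum (fun k : ℕ => ((Nat.factorial (2 * k + 1) : ℝ))⁻¹ • A ^ (2 * k + 1))
      ((Real.sin c / c) • A) := by
    have h := ((Real.hasSum_sin c).div_const c).smul_const A
    convert h using 2 with k
    rw [pow_odd_of_cube hA, smul_smul]
    congr 1
    field_simp
    ring
  have hcos : HasSum (fun n : ℕ => (-1 : ℝ) ^ (n + 1) * c ^ (2 * (n + 1)) /
      (Nat.factorial (2 * (n + 1)))) (Real.cos c - 1) := by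
    refine (hasSum_nat_add_iff
      (f := fun n : ℕ => (-1 : ℝ) ^ n * c ^ (2 * n) / (Nat.factorial (2 * n))) 1).mpr ?_
    simpa using Real.hasSum_cos c
  have hcos2 : HasSum (fun n : ℕ => (-1 : ℝ) ^ n * c ^ (2 * n) / (Nat.factorial (2 * (n + 1))))
      ((1 - Real.cos c) / c ^ 2) := by
    have h := (hcos.neg).div_const (c ^ 2)
    convert h using 2 with n
    · rfl
    · field_simp
      ring
    · ring
  have heven : HasSum (fun k : ℕ => ((Nat.factorial (2 * k) : ℝ))⁻¹ • A ^ (2 * k))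
      (((1 - Real.cos c) / c ^ 2) • A ^ 2 + 1) := by
    have hshift : HasSum (fun n : ℕ =>
        ((Nat.factorial (2 * (n + 1)) : ℝ))⁻¹ • A ^ (2 * (n + 1)))
        (((1 - Real.cos c) / c ^ 2) • A ^ 2) := by
      have h := hcos2.smul_const (A ^ 2)
      convert h using 2 with n
      rw [pow_even_of_cube hA, smul_smul]
      congr 1
      field_simp
    have h := (hasSum_nat_add_iff (f := fun k : ℕ =>
        ((Nat.factorial (2 * k) : ℝ))⁻¹ • A ^ (2 * k)) 1).mp hshift
    simpa using h
  have hval : (((1 - Real.cos c) / c ^ 2) • A ^ 2 + 1) + (Real.sin c / c) • A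
      = 1 + (Real.sin c / c) • A + ((1 - Real.cos c) / c ^ 2) • A ^ 2 := by abel
  exact hval ▸ HasSum.even_add_odd (f := fun n : ℕ => ((Nat.factorial n : ℝ))⁻¹ • A ^ n)
    heven hodd

set_option maxHeartbeats 1000000 in
private lemma seX_eq (s r : ℝ) :
    seX (s • e₁) (r • e₃) = !![0,0,0,0; 0,0,-s,0; 0,s,0,r; 0,0,0,0] := by
  ext i j
  fin_cases i <;> fin_cases j <;>
    simp [seX, hat, e₁, e₃, EuclideanSpace.single_apply, Matrix.vecHead, Matrix.vecTail] <;>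
    exact fun h => absurd h (by decide)

set_option maxHeartbeats 1000000 in
private lemma Msq (s r : ℝ) :
    (!![0,0,0,0; 0,0,-s,0; 0,s,0,r; 0,0,0,0] : Matrix (Fin 4) (Fin 4) ℝ) ^ 2
      = !![0,0,0,0; 0,-s^2,0,-s*r; 0,0,-s^2,0; 0,0,0,0] := by
  rw [pow_two]
  ext i j
  fin_cases i <;> fin_cases j <;>
    simp [Matrix.mul_apply, Fin.sum_univ_four, Matrix.vecHead, Matrix.vecTail] <;> ring

set_option maxHeartbeats 1000000 in
private lemma Mcube (s r : ℝ) :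
    (!![0,0,0,0; 0,0,-s,0; 0,s,0,r; 0,0,0,0] : Matrix (Fin 4) (Fin 4) ℝ) ^ 3
      = (-(s^2)) • !![0,0,0,0; 0,0,-s,0; 0,s,0,r; 0,0,0,0] := by
  rw [pow_succ, Msq]
  ext i j
  fin_cases i <;> fin_cases j <;>
    simp [Matrix.mul_apply, Fin.sum_univ_four, Matrix.vecHead, Matrix.vecTail] <;> ring

set_option maxHeartbeats 1000000 in
private lemma norm_tPart_sq (s r a b : ℝ) :
    ‖tPart ((1 : Matrix (Fin 4) (Fin 4) ℝ)
      + a • !![0,0,0,0; 0,0,-s,0; 0,s,0,r; 0,0,0,0]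
      + b • !![0,0,0,0; 0,-s^2,0,-s*r; 0,0,-s^2,0; 0,0,0,0])‖ ^ 2
      = (b * (-s * r)) ^ 2 + (a * r) ^ 2 := by
  rw [EuclideanSpace.norm_eq, Real.sq_sqrt (by positivity)]
  rw [Fin.sum_univ_three]
  simp [tPart, Matrix.one_apply, Real.norm_eq_abs, sq_abs,
    show (Fin.castSucc 0 : Fin 4) = 0 from rfl, show (Fin.castSucc 1 : Fin 4) = 1 from rfl,
    show (Fin.castSucc 2 : Fin 4) = 2 from rfl, show (Fin.last 3 : Fin 4) = 3 from rfl]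
  ring_nf
  simp only [sq_abs]

theorem stmt15 (s r : ℝ) (hs : 0 < s) :
    Jstar (s • e₁) (r • e₃) =
      r ^ 2 / 2 * (((1 - Real.cos s) / s) ^ 2 + (Real.sin s / s) ^ 2) := by
  have hexp : exp (seX (s • e₁) (r • e₃))
      = 1 + (Real.sin s / s) • !![0,0,0,0; 0,0,-s,0; 0,s,0,r; 0,0,0,0]
        + ((1 - Real.cos s) / s ^ 2) • !![0,0,0,0; 0,-s^2,0,-s*r; 0,0,-s^2,0; 0,0,0,0] := by
    rw [seX_eq, exp_of_cube hs.ne' (Mcube s r), Msq]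
  rw [Jstar, hexp, norm_tPart_sq]
  have hs' : s ≠ 0 := hs.ne'
  field_simp
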